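/- (Existence of optimal dual quantizers.) Let X be a real random variable with P(X ∈ [a,b]) = 1 and let Λ be uniformly distributed on [0,1] and independent of X. For every N ≥ 1 the infimum inf{ E|X − J_Γ(X,Λ)|² : Γ a grid in [a,b] of at most N points } is attained: there exists a grid Γ* ⊂ [a,b] with at most N points such that E|X − J_{Γ*}(X,Λ)|² equals this infimum. -/

import Mathlib

open MeasureTheory ProbabilityTheory

/-- Index `j*(ξ)` of the segment `[x_j, x_{j+1})` of the grid containing `ξ`
(with default value `N`, corresponding to the closed last segment). -/
noncomputable def jstar (N : ℕ) (x : ℕ → ℝ) (ξ : ℝ) : ℕ :=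
  if h : ∃ j, j ≤ N ∧ x j ≤ ξ ∧ ξ < x (j + 1) then h.choose else N

/-- The dual quantization operator `J_Γ(ξ, λ)` associated with the grid
`x 0 ≤ x 1 ≤ … ≤ x (N+1)`. -/
noncomputable def dualQ (N : ℕ) (x : ℕ → ℝ) (ξ lam : ℝ) : ℝ :=
  if x (jstar N x ξ + 1) = x (jstar N x ξ) then ξ
  else if lam < (x (jstar N x ξ + 1) - ξ) / (x (jstar N x ξ + 1) - x (jstar N x ξ)) then
    x (jstar N x ξ)
  else x (jstar N x ξ + 1)

section aux
variable {N : ℕ} {x : ℕ → ℝ} {ξ : ℝ}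

lemma grid_mono (hm : ∀ j ≤ N, x j ≤ x (j + 1)) :
    ∀ i j, i ≤ j → j ≤ N + 1 → x i ≤ x j := by
  intro i j hij hj
  induction j with
  | zero => simp_all
  | succ k ih =>
    rcases Nat.eq_or_lt_of_le hij with h | h
    · exact le_of_eq (by rw [h])
    · exact le_trans (ih (Nat.lt_succ_iff.mp h) (le_trans (Nat.le_succ k) hj))
        (hm k (Nat.succ_le_succ_iff.mp hj))

lemma seg_unique (hm : ∀ j ≤ N, x j ≤ x (j + 1)) {i j : ℕ}
    (hi : i ≤ N ∧ x i ≤ ξ ∧ ξ < x (i + 1)) (hj : j ≤ N ∧ x j ≤ ξ ∧ ξ < x (j + 1)) : i = j := by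
  by_contra hne
  rcases Nat.lt_or_ge i j with h | h
  · have : x (i + 1) ≤ x j := grid_mono hm _ _ h (le_trans hj.1 (Nat.le_succ N))
    linarith [hi.2.2, hj.2.1]
  · have hji : j < i := lt_of_le_of_ne h (Ne.symm hne)
    have : x (j + 1) ≤ x i := grid_mono hm _ _ hji (le_trans hi.1 (Nat.le_succ N))
    linarith [hj.2.2, hi.2.1]

lemma jstar_eq (hm : ∀ j ≤ N, x j ≤ x (j + 1)) {j : ℕ} (hj : j ≤ N)
    (h1 : x j ≤ ξ) (h2 : ξ < x (j + 1)) : jstar N x ξ = j := by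
  have h : ∃ j, j ≤ N ∧ x j ≤ ξ ∧ ξ < x (j + 1) := ⟨j, hj, h1, h2⟩
  rw [jstar, dif_pos h]
  exact seg_unique hm h.choose_spec ⟨hj, h1, h2⟩

lemma jstar_default (h : ¬ ∃ j, j ≤ N ∧ x j ≤ ξ ∧ ξ < x (j + 1)) : jstar N x ξ = N := by
  rw [jstar, dif_neg h]

lemma jstar_le : jstar N x ξ ≤ N := by
  rw [jstar]; split
  · next h => exact h.choose_spec.1
  · exact le_rfl

lemma jstar_spec (h : ∃ j, j ≤ N ∧ x j ≤ ξ ∧ ξ < x (j + 1)) :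
    x (jstar N x ξ) ≤ ξ ∧ ξ < x (jstar N x ξ + 1) := by
  rw [jstar, dif_pos h]; exact ⟨h.choose_spec.2.1, h.choose_spec.2.2⟩

lemma seg_exists {a b : ℝ} (hm : ∀ j ≤ N, x j ≤ x (j + 1)) (h0 : x 0 = a)
    (hend : x (N + 1) = b) (ha : a ≤ ξ) (hb : ξ < b) :
    ∃ j, j ≤ N ∧ x j ≤ ξ ∧ ξ < x (j + 1) := by
  set P : ℕ → Prop := fun j => x j ≤ ξ with hP
  have hP0 : P 0 := by rw [hP]; simp [h0, ha]
  classical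
  set j := Nat.findGreatest P (N + 1) with hj
  have hPj : P j := Nat.findGreatest_spec (Nat.zero_le _) hP0
  have hjle : j ≤ N + 1 := Nat.findGreatest_le _
  have hjN : j ≤ N := by
    rcases Nat.lt_or_ge j (N + 1) with h | h
    · omega
    · exfalso; have : j = N + 1 := le_antisymm hjle h
      rw [this, hP] at hPj; rw [hend] at hPj; linarith
  refine ⟨j, hjN, hPj, ?_⟩
  by_contra hc
  push_neg at hc
  exact Nat.findGreatest_is_greatest (n := N + 1) (Nat.lt_succ_self j) (by omega) hc

lemma measurable_jstar (hm : ∀ j ≤ N, x j ≤ x (j + 1)) : Measurable (jstar N x) := by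
  apply measurable_to_countable'
  intro n
  rcases Nat.lt_trichotomy n N with h | h | h
  · have : jstar N x ⁻¹' {n} = Set.Ico (x n) (x (n + 1)) := by
      ext ξ
      simp only [Set.mem_preimage, Set.mem_singleton_iff, Set.mem_Ico]
      constructor
      · intro hξ
        by_cases hex : ∃ j, j ≤ N ∧ x j ≤ ξ ∧ ξ < x (j + 1)
        · have := jstar_spec (x := x) hex; rw [hξ] at this; exact this
        · exact absurd (jstar_default hex ▸ hξ.symm) (by omega)
      · intro hξ; exact jstar_eq hm h.le hξ.1 hξ.2
    rw [this]; exact measurableSet_Ico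
  · subst h
    have : jstar n x ⁻¹' {n} =
        Set.Ico (x n) (x (n + 1)) ∪ (⋃ j ∈ Finset.range (n + 1), Set.Ico (x j) (x (j + 1)))ᶜ := by
      ext ξ
      simp only [Set.mem_preimage, Set.mem_singleton_iff, Set.mem_union, Set.mem_Ico,
        Set.mem_compl_iff, Set.mem_iUnion, Finset.mem_range, not_exists]
      constructor
      · intro hξ
        by_cases hex : ∃ j, j ≤ n ∧ x j ≤ ξ ∧ ξ < x (j + 1)
        · left; have := jstar_spec (x := x) hex; rw [hξ] at this; exact this
        · right; intro j hj hmem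
          exact hex ⟨j, by omega, hmem.1, hmem.2⟩
      · rintro (hξ | hξ)
        · exact jstar_eq hm le_rfl hξ.1 hξ.2
        · apply jstar_default
          rintro ⟨j, hj, h1, h2⟩
          exact hξ j (by omega) ⟨h1, h2⟩
    rw [this]
    exact measurableSet_Ico.union (MeasurableSet.biUnion (Finset.range (n+1)).countable_toSet
      (fun _ _ => measurableSet_Ico)).compl
  · have : jstar N x ⁻¹' {n} = ∅ := by
      ext ξ
      simp only [Set.mem_preimage, Set.mem_singleton_iff, Set.mem_empty_iff_false, iff_false]
      intro hξ; have := jstar_le (N := N) (x := x) (ξ := ξ); omega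
    rw [this]; exact MeasurableSet.empty

lemma measurable_nat_real (g : ℕ → ℝ) : Measurable g := measurable_from_top

lemma measurable_dualQ (hm : ∀ j ≤ N, x j ≤ x (j + 1)) :
    Measurable (fun p : ℝ × ℝ => dualQ N x p.1 p.2) := by
  have hk : Measurable fun p : ℝ × ℝ => jstar N x p.1 :=
    (measurable_jstar hm).comp measurable_fst
  have hx1 : Measurable fun p : ℝ × ℝ => x (jstar N x p.1 + 1) :=
    (measurable_nat_real (fun j => x (j + 1))).comp hk
  have hx0 : Measurable fun p : ℝ × ℝ => x (jstar N x p.1) :=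
    (measurable_nat_real x).comp hk
  unfold dualQ
  apply Measurable.ite (measurableSet_eq_fun hx1 hx0)
  · exact measurable_fst
  apply Measurable.ite
  · exact measurableSet_lt measurable_snd (((hx1.sub measurable_fst)).div (hx1.sub hx0))
  · exact hx0
  · exact hx1

lemma volume_Icc01 : IsProbabilityMeasure (volume.restrict (Set.Icc (0:ℝ) 1)) :=
  ⟨by simp [Measure.restrict_apply_univ, Real.volume_Icc]⟩

lemma integral_ite_lt (t c1 c2 : ℝ) (h0 : 0 ≤ t) (h1 : t ≤ 1) :
    (∫ lam in Set.Icc (0:ℝ) 1, (if lam < t then c1 else c2)) = t * c1 + (1 - t) * c2 := by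
  haveI := volume_Icc01
  have hfun : (fun lam : ℝ => if lam < t then c1 else c2) =
      fun lam : ℝ => c2 + Set.indicator (Set.Iio t) (fun _ => c1 - c2) lam := by
    funext lam
    by_cases h : lam < t
    · simp [h, Set.indicator_of_mem (Set.mem_Iio.mpr h)]
    · simp [h, Set.indicator_of_notMem (fun hmem => h (Set.mem_Iio.mp hmem))]
  rw [hfun]
  rw [integral_add (integrable_const c2)
    ((integrable_const (c1 - c2)).indicator measurableSet_Iio)]
  rw [integral_indicator measurableSet_Iio]
  rw [integral_const, setIntegral_const]
  have hmeas : (volume.restrict (Set.Icc (0:ℝ) 1)) (Set.Iio t) = ENNReal.ofReal t := by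
    rw [Measure.restrict_apply measurableSet_Iio]
    have : Set.Iio t ∩ Set.Icc (0:ℝ) 1 = Set.Ico 0 t := by
      ext lam
      simp only [Set.mem_inter_iff, Set.mem_Iio, Set.mem_Icc, Set.mem_Ico]
      constructor
      · rintro ⟨h', h0', _⟩; exact ⟨h0', h'⟩
      · rintro ⟨h0', h'⟩; exact ⟨h', h0', le_trans h'.le h1⟩
    rw [this, Real.volume_Ico, sub_zero]
  rw [measureReal_def, measureReal_def, hmeas]
  rw [ENNReal.toReal_ofReal h0, measure_univ]
  simp only [ENNReal.toReal_one, one_smul, smul_eq_mul]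
  ring

lemma inner_integral {a b : ℝ} (hm : ∀ j ≤ N, x j ≤ x (j + 1)) (h0 : x 0 = a)
    (hend : x (N + 1) = b) (hξ : ξ ∈ Set.Icc a b) :
    (∫ lam in Set.Icc (0:ℝ) 1, |ξ - dualQ N x ξ lam| ^ 2) =
      (x (jstar N x ξ + 1) - ξ) * (ξ - x (jstar N x ξ)) := by
  haveI := volume_Icc01
  set j := jstar N x ξ with hj
  by_cases hex : ∃ j, j ≤ N ∧ x j ≤ ξ ∧ ξ < x (j + 1)
  · obtain ⟨hx1, hx2⟩ := jstar_spec hex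
    have hd : 0 < x (j + 1) - x j := by linarith
    have hne : x (j + 1) ≠ x j := by intro h; rw [h] at hd; linarith
    set t := (x (j + 1) - ξ) / (x (j + 1) - x j) with ht
    have ht0 : 0 ≤ t := div_nonneg (by linarith) hd.le
    have ht1 : t ≤ 1 := by
      rw [ht, div_le_one hd]; linarith
    have hfun : (fun lam : ℝ => |ξ - dualQ N x ξ lam| ^ 2) =
        fun lam : ℝ => if lam < t then (ξ - x j)^2 else (ξ - x (j+1))^2 := by
      funext lam
      rw [dualQ, if_neg hne, ← hj, ← ht]
      by_cases h : lam < t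
      · rw [if_pos h, if_pos h, sq_abs]
      · rw [if_neg h, if_neg h, sq_abs]
    rw [hfun, integral_ite_lt t _ _ ht0 ht1, ht]
    field_simp
    ring
  · have hjN : j = N := jstar_default hex
    have hξb : ξ = b := by
      rcases lt_or_eq_of_le hξ.2 with h | h
      · exact absurd (seg_exists hm h0 hend hξ.1 h) hex
      · exact h
    have hxN1 : x (j + 1) = ξ := by rw [hjN, hend, hξb]
    by_cases hdeg : x (j + 1) = x j
    · have hfun : (fun lam : ℝ => |ξ - dualQ N x ξ lam| ^ 2) = fun _ : ℝ => 0 := by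
        funext lam
        rw [dualQ, ← hj, if_pos hdeg]
        simp
      rw [hfun, integral_zero, hxN1]
      ring
    · have hd : 0 < x (j + 1) - x j := by
        rcases lt_or_eq_of_le (grid_mono hm j (j+1) (Nat.le_succ j) (by omega)) with h | h
        · linarith
        · exact absurd h.symm hdeg
      have hfun : ∀ lam ∈ Set.Icc (0:ℝ) 1, |ξ - dualQ N x ξ lam| ^ 2 = 0 := by
        intro lam hlam
        rw [dualQ, ← hj, if_neg hdeg]
        have : ¬ lam < (x (j + 1) - ξ) / (x (j + 1) - x j) := by
          rw [hxN1]; simp only [sub_self, zero_div]; linarith [hlam.1]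
        rw [if_neg this, hxN1]
        simp
      rw [setIntegral_congr_fun measurableSet_Icc hfun]
      rw [integral_zero, hxN1]
      ring

end aux

noncomputable def Gfun (N : ℕ) (x : ℕ → ℝ) (ξ : ℝ) : ℝ :=
  (Finset.range (N + 1)).sup' ⟨0, Finset.mem_range.mpr (Nat.succ_pos N)⟩
    (fun j => (x (j + 1) - ξ) * (ξ - x j))

section aux2
variable {N : ℕ} {x : ℕ → ℝ} {ξ a b : ℝ}

lemma grid_mem (hm : ∀ j ≤ N, x j ≤ x (j + 1)) (h0 : x 0 = a) (hend : x (N + 1) = b) :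
    ∀ j ≤ N + 1, x j ∈ Set.Icc a b := by
  intro j hj
  constructor
  · rw [← h0]; exact grid_mono hm 0 j (Nat.zero_le j) hj
  · rw [← hend]; exact grid_mono hm j (N + 1) hj le_rfl

lemma max_formula (hm : ∀ j ≤ N, x j ≤ x (j + 1)) (h0 : x 0 = a) (hend : x (N + 1) = b)
    (hξ : ξ ∈ Set.Icc a b) :
    (x (jstar N x ξ + 1) - ξ) * (ξ - x (jstar N x ξ)) = Gfun N x ξ := by
  set j := jstar N x ξ with hj
  have hjle : j ≤ N := jstar_le
  simp only [Gfun]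
  apply le_antisymm
  · exact Finset.le_sup' (fun i => (x (i + 1) - ξ) * (ξ - x i))
      (Finset.mem_range.mpr (Nat.lt_succ_of_le hjle))
  · apply Finset.sup'_le
    intro i hi
    have hiN : i ≤ N := by simpa [Nat.lt_succ_iff] using hi
    by_cases hex : ∃ j, j ≤ N ∧ x j ≤ ξ ∧ ξ < x (j + 1)
    · obtain ⟨hx1, hx2⟩ := jstar_spec (x := x) hex
      have hQj : 0 ≤ (x (j + 1) - ξ) * (ξ - x j) :=
        mul_nonneg (by linarith) (by linarith)
      by_cases hcase : x i ≤ ξ ∧ ξ < x (i + 1)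
      · have : i = j := seg_unique hm ⟨hiN, hcase.1, hcase.2⟩ ⟨hjle, hx1, hx2⟩
        rw [this]
      · rcases not_and_or.mp hcase with h | h
        · push_neg at h
          have : x i ≤ x (i + 1) := hm i hiN
          nlinarith
        · push_neg at h
          have : x i ≤ x (i + 1) := hm i hiN
          nlinarith
    · have hjN : j = N := jstar_default hex
      have hξb : ξ = b := by
        rcases lt_or_eq_of_le hξ.2 with h | h
        · exact absurd (seg_exists hm h0 hend hξ.1 h) hex
        · exact h
      have hQj : (x (j + 1) - ξ) * (ξ - x j) = 0 := by
        rw [hjN, hend, hξb]; ring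
      rw [hQj]
      have hxi1 : x (i + 1) ≤ b := (grid_mem hm h0 hend (i + 1) (by omega)).2
      have hxi : x i ≤ b := (grid_mem hm h0 hend i (by omega)).2
      rw [hξb]
      nlinarith

lemma dualQ_mem (hm : ∀ j ≤ N, x j ≤ x (j + 1)) (h0 : x 0 = a) (hend : x (N + 1) = b)
    (hξ : ξ ∈ Set.Icc a b) (lam : ℝ) : dualQ N x ξ lam ∈ Set.Icc a b := by
  have hjle : jstar N x ξ ≤ N := jstar_le
  rw [dualQ]
  split
  · exact hξ
  split
  · exact grid_mem hm h0 hend _ (by omega)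
  · exact grid_mem hm h0 hend _ (by omega)

end aux2

section stepA

variable {Ω : Type*} [MeasurableSpace Ω] (P : Measure Ω) [IsProbabilityMeasure P]
  (a b : ℝ) (N : ℕ) (X : Ω → ℝ) (Λ : Ω → ℝ)

lemma errP_eq {x : ℕ → ℝ}
    (hXmeas : Measurable X) (hXab : ∀ᵐ ω ∂P, X ω ∈ Set.Icc a b)
    (hΛmeas : Measurable Λ)
    (hΛ : Measure.map Λ P = volume.restrict (Set.Icc (0 : ℝ) 1))
    (hindep : IndepFun X Λ P)
    (hm : ∀ j ≤ N, x j ≤ x (j + 1)) (h0 : x 0 = a) (hend : x (N + 1) = b) :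
    ∫ ω, |X ω - dualQ N x (X ω) (Λ ω)| ^ 2 ∂P = ∫ ξ, Gfun N x ξ ∂(Measure.map X P) := by
  set μ := Measure.map X P with hμ
  set ν := volume.restrict (Set.Icc (0 : ℝ) 1) with hν
  haveI : IsProbabilityMeasure μ := Measure.isProbabilityMeasure_map hXmeas.aemeasurable
  haveI : IsProbabilityMeasure ν := volume_Icc01
  have hmap : Measure.map (fun ω => (X ω, Λ ω)) P = μ.prod ν := by
    have h := (indepFun_iff_map_prod_eq_prod_map_map hXmeas.aemeasurable
      hΛmeas.aemeasurable).mp hindep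
    rw [hΛ] at h
    exact h
  have hμcc : μ (Set.Icc a b)ᶜ = 0 := by
    rw [hμ, Measure.map_apply hXmeas measurableSet_Icc.compl]
    exact (ae_iff.mp hXab)
  set f : ℝ × ℝ → ℝ := fun p => |p.1 - dualQ N x p.1 p.2| ^ 2 with hf
  have hfmeas : Measurable f :=
    ((measurable_fst.sub (measurable_dualQ hm)).abs).pow_const 2
  have hae1 : ∀ᵐ p ∂(μ.prod ν), p.1 ∈ Set.Icc a b := by
    rw [ae_iff]
    have : {p : ℝ × ℝ | ¬ p.1 ∈ Set.Icc a b} = (Set.Icc a b)ᶜ ×ˢ Set.univ := by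
      ext p; simp [Set.mem_prod]
    rw [this, Measure.prod_prod, hμcc, zero_mul]
  have hbound : ∀ᵐ p ∂(μ.prod ν), ‖f p‖ ≤ (b - a) ^ 2 := by
    filter_upwards [hae1] with p hp
    have hd := dualQ_mem hm h0 hend hp p.2
    have habs : |p.1 - dualQ N x p.1 p.2| ≤ b - a := by
      rw [abs_sub_le_iff]
      constructor <;> [skip; skip] <;>
        · obtain ⟨h1, h2⟩ := hp; obtain ⟨h3, h4⟩ := hd; linarith
    simp only [hf, Real.norm_eq_abs, abs_pow, abs_abs]
    exact pow_le_pow_left₀ (abs_nonneg _) habs 2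
  have hint : Integrable f (μ.prod ν) :=
    Integrable.mono' (integrable_const ((b - a) ^ 2)) hfmeas.aestronglyMeasurable hbound
  calc ∫ ω, |X ω - dualQ N x (X ω) (Λ ω)| ^ 2 ∂P
      = ∫ p, f p ∂(μ.prod ν) := by
        rw [← hmap, integral_map (hXmeas.prodMk hΛmeas).aemeasurable]
        rw [hmap]; exact hfmeas.aestronglyMeasurable
    _ = ∫ ξ, (∫ lam, f (ξ, lam) ∂ν) ∂μ := integral_prod f hint
    _ = ∫ ξ, Gfun N x ξ ∂μ := by
        have hae2 : ∀ᵐ ξ ∂μ, ξ ∈ Set.Icc a b := by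
          rw [ae_iff]; exact hμcc
        apply integral_congr_ae
        filter_upwards [hae2] with ξ hξ
        rw [hf]
        simp only
        rw [hν, inner_integral hm h0 hend hξ, max_formula hm h0 hend hξ]

end stepA

section stepC
variable {N : ℕ} {x : ℕ → ℝ} {ξ a b : ℝ}

lemma continuous_Gfun_xi (N : ℕ) (x : ℕ → ℝ) : Continuous (Gfun N x) :=
  Continuous.finset_sup'_apply _ fun _ _ =>
    (continuous_const.sub continuous_id).mul (continuous_id.sub continuous_const)

lemma continuous_Gfun_x (N : ℕ) (ξ : ℝ) : Continuous (fun x : ℕ → ℝ => Gfun N x ξ) :=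
  Continuous.finset_sup'_apply _ fun i _ =>
    ((continuous_apply (i + 1)).sub continuous_const).mul
      (continuous_const.sub (continuous_apply i))

lemma Gfun_bound (hm : ∀ j ≤ N, x j ≤ x (j + 1)) (h0 : x 0 = a) (hend : x (N + 1) = b)
    (hξ : ξ ∈ Set.Icc a b) : |Gfun N x ξ| ≤ (b - a) ^ 2 := by
  have hQ : ∀ j ≤ N, |(x (j + 1) - ξ) * (ξ - x j)| ≤ (b - a) ^ 2 := by
    intro j hj
    have h1 := grid_mem hm h0 hend (j + 1) (by omega)
    have h2 := grid_mem hm h0 hend j (by omega)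
    rw [abs_mul, sq]
    apply mul_le_mul _ _ (abs_nonneg _) (by obtain ⟨u, v⟩ := hξ; linarith)
    · rw [abs_sub_le_iff]; obtain ⟨u1, v1⟩ := h1; obtain ⟨u, v⟩ := hξ
      constructor <;> linarith
    · rw [abs_sub_le_iff]; obtain ⟨u2, v2⟩ := h2; obtain ⟨u, v⟩ := hξ
      constructor <;> linarith
  rw [abs_le]
  constructor
  · have h0' : -((b - a) ^ 2) ≤ (x (0 + 1) - ξ) * (ξ - x 0) :=
      (abs_le.mp (hQ 0 (Nat.zero_le N))).1
    calc -((b - a) ^ 2) ≤ (x (0 + 1) - ξ) * (ξ - x 0) := h0'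
      _ ≤ Gfun N x ξ := Finset.le_sup' (f := fun j => (x (j + 1) - ξ) * (ξ - x j))
        (Finset.mem_range.mpr (Nat.succ_pos N))
  · simp only [Gfun]
    apply Finset.sup'_le
    intro j hj
    exact (abs_le.mp (hQ j (by simpa [Nat.lt_succ_iff] using hj))).2

lemma Gfun_congr {y : ℕ → ℝ} (h : ∀ j ≤ N + 1, x j = y j) : Gfun N x ξ = Gfun N y ξ := by
  simp only [Gfun]
  apply Finset.sup'_congr _ rfl
  intro j hj
  rw [Finset.mem_range, Nat.lt_succ_iff] at hj
  rw [h j (by omega), h (j + 1) (by omega)]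

end stepC

/-- **Existence of optimal dual quantizers.** Let `X` be a real random variable
with `P(X ∈ [a,b]) = 1` and let `Λ` be uniformly distributed on `[0,1]` and independent of `X`.
For every `N ≥ 1` the infimum
`inf { E|X − J_Γ(X,Λ)|² : Γ a grid in [a,b] of at most N points }` is attained: there exists a
grid `Γ*` in `[a,b]` with at most `N` points realizing this infimum. -/
theorem dualQ_optimal_grid_exists {Ω : Type*} [MeasurableSpace Ω] (P : Measure Ω)
    [IsProbabilityMeasure P]
    (a b : ℝ) (hab : a < b) (N : ℕ) (hN : 1 ≤ N)
    (X : Ω → ℝ) (hXmeas : Measurable X) (hXab : ∀ᵐ ω ∂P, X ω ∈ Set.Icc a b)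
    (Λ : Ω → ℝ) (hΛmeas : Measurable Λ)
    (hΛ : Measure.map Λ P = volume.restrict (Set.Icc (0 : ℝ) 1))
    (hindep : IndepFun X Λ P) :
    ∃ xs : ℕ → ℝ,
      ((∀ j ≤ N, xs j ≤ xs (j + 1)) ∧ xs 0 = a ∧ xs (N + 1) = b) ∧
      ∀ x : ℕ → ℝ, ((∀ j ≤ N, x j ≤ x (j + 1)) ∧ x 0 = a ∧ x (N + 1) = b) →
        (∫ ω, |X ω - dualQ N xs (X ω) (Λ ω)| ^ 2 ∂P) ≤
          ∫ ω, |X ω - dualQ N x (X ω) (Λ ω)| ^ 2 ∂P := by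
  classical
  set μ := Measure.map X P with hμ
  haveI : IsProbabilityMeasure μ := Measure.isProbabilityMeasure_map hXmeas.aemeasurable
  have hμcc : μ (Set.Icc a b)ᶜ = 0 := by
    rw [hμ, Measure.map_apply hXmeas measurableSet_Icc.compl]
    exact ae_iff.mp hXab
  have haeIcc : ∀ᵐ ξ ∂μ, ξ ∈ Set.Icc a b := by rw [ae_iff]; exact hμcc
  set K : Set (ℕ → ℝ) := {x | (∀ j ≤ N, x j ≤ x (j + 1)) ∧ x 0 = a ∧ x (N + 1) = b ∧
    ∀ j, N + 2 ≤ j → x j = b} with hK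
  set F : (ℕ → ℝ) → ℝ := fun x => ∫ ξ, Gfun N x ξ ∂μ with hF
  -- K is compact
  have hKsub : K ⊆ Set.pi Set.univ fun _ : ℕ => Set.Icc a b := by
    rintro x ⟨hm, h0, hend, htail⟩ j _
    rcases Nat.lt_or_ge j (N + 2) with h | h
    · exact grid_mem hm h0 hend j (by omega)
    · rw [htail j h]; exact ⟨hab.le, le_rfl⟩
  have hKclosed : IsClosed K := by
    have hA : IsClosed {x : ℕ → ℝ | ∀ j ≤ N, x j ≤ x (j + 1)} := by
      have : {x : ℕ → ℝ | ∀ j ≤ N, x j ≤ x (j + 1)} =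
          ⋂ j, {x : ℕ → ℝ | j ≤ N → x j ≤ x (j + 1)} := by
        ext y; simp [Set.mem_iInter]
      rw [this]
      apply isClosed_iInter
      intro j
      by_cases hj : j ≤ N
      · have : {x : ℕ → ℝ | j ≤ N → x j ≤ x (j + 1)} = {x : ℕ → ℝ | x j ≤ x (j + 1)} := by
          ext y; simp [hj]
        rw [this]
        exact isClosed_le (continuous_apply j) (continuous_apply (j + 1))
      · have : {x : ℕ → ℝ | j ≤ N → x j ≤ x (j + 1)} = Set.univ := by
          ext y; simp [hj]
        rw [this]; exact isClosed_univ
    have hB : IsClosed {x : ℕ → ℝ | x 0 = a} :=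
      isClosed_eq (continuous_apply 0) continuous_const
    have hC : IsClosed {x : ℕ → ℝ | x (N + 1) = b} :=
      isClosed_eq (continuous_apply (N + 1)) continuous_const
    have hD : IsClosed {x : ℕ → ℝ | ∀ j, N + 2 ≤ j → x j = b} := by
      have : {x : ℕ → ℝ | ∀ j, N + 2 ≤ j → x j = b} =
          ⋂ j, {x : ℕ → ℝ | N + 2 ≤ j → x j = b} := by
        ext y; simp [Set.mem_iInter]
      rw [this]
      apply isClosed_iInter
      intro j
      by_cases hj : N + 2 ≤ j
      · have : {x : ℕ → ℝ | N + 2 ≤ j → x j = b} = {x : ℕ → ℝ | x j = b} := by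
          ext y; simp [hj]
        rw [this]; exact isClosed_eq (continuous_apply j) continuous_const
      · have : {x : ℕ → ℝ | N + 2 ≤ j → x j = b} = Set.univ := by
          ext y; simp [hj]
        rw [this]; exact isClosed_univ
    rw [hK, Set.setOf_and, Set.setOf_and, Set.setOf_and]
    exact hA.inter (hB.inter (hC.inter hD))
  have hKcomp : IsCompact K :=
    IsCompact.of_isClosed_subset (isCompact_univ_pi fun _ => isCompact_Icc) hKclosed hKsub
  have hKne : K.Nonempty := by
    refine ⟨fun j => if j ≤ N then a else b, ?_, ?_, ?_, ?_⟩
    · intro j hj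
      simp only [if_pos hj]
      by_cases hj1 : j + 1 ≤ N
      · rw [if_pos hj1]
      · rw [if_neg hj1]; exact hab.le
    · simp
    · simp
    · intro j hj
      show (if j ≤ N then a else b) = b
      rw [if_neg (by omega : ¬ j ≤ N)]
  -- continuity of F on K
  have hFcont : ContinuousOn F K := by
    intro x₀ hx₀
    apply continuousWithinAt_of_dominated (bound := fun _ => (b - a) ^ 2)
    · filter_upwards [self_mem_nhdsWithin] with x hx
      exact (continuous_Gfun_xi N x).aestronglyMeasurable
    · filter_upwards [self_mem_nhdsWithin] with x hx
      filter_upwards [haeIcc] with ξ hξ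
      obtain ⟨hm, h0, hend, _⟩ := hx
      rw [Real.norm_eq_abs]
      exact Gfun_bound hm h0 hend hξ
    · exact integrable_const _
    · filter_upwards with ξ
      exact (continuous_Gfun_x N ξ).continuousWithinAt
  obtain ⟨xs, hxsK, hmin⟩ := hKcomp.exists_isMinOn hKne hFcont
  obtain ⟨hxm, hx0, hxend, _⟩ := hxsK
  refine ⟨xs, ⟨hxm, hx0, hxend⟩, ?_⟩
  intro x hx
  obtain ⟨hm, h0, hend⟩ := hx
  set x' : ℕ → ℝ := fun j => if j ≤ N + 1 then x j else b with hx'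
  have hx'K : x' ∈ K := by
    refine ⟨?_, ?_, ?_, ?_⟩
    · intro j hj
      simp only [hx', if_pos (by omega : j ≤ N + 1), if_pos (by omega : j + 1 ≤ N + 1)]
      exact hm j hj
    · simp only [hx', if_pos (by omega : 0 ≤ N + 1)]; exact h0
    · simp only [hx', if_pos (le_refl (N + 1))]; exact hend
    · intro j hj; simp only [hx', if_neg (by omega : ¬ j ≤ N + 1)]
  have hgcongr : ∀ ξ : ℝ, Gfun N x ξ = Gfun N x' ξ := fun ξ =>
    Gfun_congr fun j hj => by simp only [hx', if_pos hj]
  rw [errP_eq P a b N X Λ hXmeas hXab hΛmeas hΛ hindep hxm hx0 hxend,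
    errP_eq P a b N X Λ hXmeas hXab hΛmeas hΛ hindep hm h0 hend]
  calc ∫ ξ, Gfun N xs ξ ∂μ = F xs := rfl
    _ ≤ F x' := hmin hx'K
    _ = ∫ ξ, Gfun N x' ξ ∂μ := rfl
    _ = ∫ ξ, Gfun N x ξ ∂μ := by
        apply integral_congr_ae
        filter_upwards with ξ
        exact (hgcongr ξ).symm
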